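/- Let y : [0,∞) → [0,∞) be nondecreasing, right-continuous, unbounded above. Let τ > 0 be a discontinuity point of y, i.e. y(τ−) < y(τ), and let t ∈ [y(τ−), y(τ)). Then ((y^− ∘ (y^{-1})^−))^+(t) = y(τ−), i.e. the right limit at t of the function u ↦ y^−((y^{-1})^−(u)) equals y(τ−). -/

import Mathlib

open scoped NNReal
open Filter Topology Function

noncomputable section

/-- The generalized (right-continuous) inverse `y⁻¹(t) = inf {s > 0 : y(s) > t}` of a
nondecreasing, right-continuous, unbounded function `y : [0,∞) → [0,∞)`. -/
def ginv (y : ℝ≥0 → ℝ≥0) (t : ℝ≥0) : ℝ≥0 :=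
  sInf {s : ℝ≥0 | 0 < s ∧ t < y s}

/-- If `τ > 0` is a discontinuity point of `y` (i.e. `y(τ−) < y(τ)`) and
`t ∈ [y(τ−), y(τ))`, then the right limit at `t` of `u ↦ y⁻((y⁻¹)⁻(u))` equals `y(τ−)`. -/
theorem rightLim_eq_leftLim_of_jump (y : ℝ≥0 → ℝ≥0) (hmono : Monotone y)
    (hrc : ∀ t : ℝ≥0, ContinuousWithinAt y (Set.Ici t) t)
    (hub : ∀ M : ℝ≥0, ∃ s : ℝ≥0, M < y s)
    (τ : ℝ≥0) (hτ : 0 < τ) (hjump : Function.leftLim y τ < y τ)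
    (t : ℝ≥0) (ht : t ∈ Set.Ico (Function.leftLim y τ) (y τ)) :
    Function.rightLim (fun u => Function.leftLim y (Function.leftLim (ginv y) u)) t =
      Function.leftLim y τ := by
  obtain ⟨ht1, ht2⟩ := ht
  -- ginv y is constant τ on [leftLim y τ, y τ)
  have hginv : ∀ u ∈ Set.Ico (Function.leftLim y τ) (y τ), ginv y u = τ := by
    intro u ⟨hu1, hu2⟩
    have hset : {s : ℝ≥0 | 0 < s ∧ u < y s} = Set.Ici τ := by
      ext s
      simp only [Set.mem_setOf_eq, Set.mem_Ici]
      constructor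
      · rintro ⟨-, hus⟩
        by_contra h
        push_neg at h
        exact absurd (hus.trans_le ((hmono.le_leftLim h).trans hu1)) (lt_irrefl u)
      · intro h
        exact ⟨hτ.trans_le h, hu2.trans_le (hmono h)⟩
    rw [ginv, hset, csInf_Ici]
  -- leftLim (ginv y) is τ on (t, y τ)
  have hll : ∀ u ∈ Set.Ioo t (y τ), Function.leftLim (ginv y) u = τ := by
    intro u ⟨hu1, hu2⟩
    have hne : (𝓝[<] u).NeBot := nhdsWithin_Iio_self_neBot' ⟨t, hu1⟩
    apply leftLim_eq_of_tendsto (h := hne)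
    have hev : (fun v => ginv y v) =ᶠ[𝓝[<] u] fun _ => τ := by
      filter_upwards [Ioo_mem_nhdsLT_of_mem ⟨hu1, le_refl u⟩] with v hv
      exact hginv v ⟨ht1.trans hv.1.le, hv.2.trans hu2⟩
    exact Tendsto.congr' hev.symm tendsto_const_nhds
  -- rightLim
  have hne : (𝓝[>] t).NeBot := nhdsGT_neBot t
  apply rightLim_eq_of_tendsto (h := hne)
  have hev : (fun u => Function.leftLim y (Function.leftLim (ginv y) u)) =ᶠ[𝓝[>] t]
      fun _ => Function.leftLim y τ := by
    filter_upwards [Ioo_mem_nhdsGT_of_mem ⟨le_refl t, ht2⟩] with u hu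
    rw [hll u hu]
  exact Tendsto.congr' hev.symm tendsto_const_nhds
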